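/- For every k ∈ {1,2,3}, every t ∈ ℝ, and every Θ, the basis vector e_Θ is a simultaneous eigenvector of r̂_k(t)² and p̂_k(t)² with eigenvalue p − q(Θ) + θ_k: r̂_k(t)² e_Θ = p̂_k(t)² e_Θ = (p − q(Θ) + θ_k) e_Θ. -/

import Mathlib

open scoped BigOperators
open Finset

/-- Index set: triples Θ = (θ₁,θ₂,θ₃) with θᵢ ∈ {0,1}. -/
abbrev WIdx := Fin 3 → Fin 2

/-- The 8-dimensional state space V = EuclideanSpace ℂ ({0,1}³). -/
abbrev WV := EuclideanSpace ℂ WIdx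

/-- Orthonormal basis vector e_Θ. -/
noncomputable def eV (Θ : WIdx) : WV := EuclideanSpace.single Θ 1

/-- The basis (e_Θ)_Θ of V, as a `Basis`. -/
noncomputable def bV : Module.Basis WIdx ℂ WV := (EuclideanSpace.basisFun WIdx ℂ).toBasis

/-- q(Θ) = θ₁ + θ₂ + θ₃. -/
def qv (Θ : WIdx) : ℕ := ∑ j, (Θ j : ℕ)

/-- Sign factor (−1)^(θ₁ + ⋯ + θ_{i−1}). -/
def sgnBelow (i : Fin 3) (Θ : WIdx) : ℂ :=
  (-1 : ℂ) ^ (∑ j : Fin 3, if (j : ℕ) < (i : ℕ) then (Θ j : ℕ) else 0)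

/-- Sign factor (−1)^(θ₁ + ⋯ + θ_i). -/
def sgnUpTo (i : Fin 3) (Θ : WIdx) : ℂ :=
  (-1 : ℂ) ^ (∑ j : Fin 3, if (j : ℕ) ≤ (i : ℕ) then (Θ j : ℕ) else 0)

/-- A_i⁻ e_Θ = θ_i (−1)^(θ₁+⋯+θ_{i−1}) √(p−q(Θ)+1) e_{Θ[θ_i↦0]}. -/
noncomputable def Aminus (p : ℕ) (i : Fin 3) : WV →ₗ[ℂ] WV :=
  bV.constr ℂ fun Θ =>
    (((Θ i : ℕ) : ℂ) * sgnBelow i Θ *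
      ((Real.sqrt ((p : ℝ) - (qv Θ : ℝ) + 1) : ℝ) : ℂ)) • eV (Function.update Θ i 0)

/-- A_i⁺ e_Θ = (1−θ_i) (−1)^(θ₁+⋯+θ_{i−1}) √(p−q(Θ)) e_{Θ[θ_i↦1]}. -/
noncomputable def Aplus (p : ℕ) (i : Fin 3) : WV →ₗ[ℂ] WV :=
  bV.constr ℂ fun Θ =>
    (((1 : ℂ) - ((Θ i : ℕ) : ℂ)) * sgnBelow i Θ *
      ((Real.sqrt ((p : ℝ) - (qv Θ : ℝ)) : ℝ) : ℂ)) • eV (Function.update Θ i 1)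

/-- Anticommutator {X,Y} = XY + YX. -/
noncomputable def acommOp (X Y : WV →ₗ[ℂ] WV) : WV →ₗ[ℂ] WV := X ∘ₗ Y + Y ∘ₗ X

/-- Commutator [X,Y] = XY − YX. -/
noncomputable def commOp (X Y : WV →ₗ[ℂ] WV) : WV →ₗ[ℂ] WV := X ∘ₗ Y - Y ∘ₗ X

/-- Dimensionless Hamiltonian ĥ = Σᵢ {A_i⁺, A_i⁻}. -/
noncomputable def hOp (p : ℕ) : WV →ₗ[ℂ] WV := ∑ i, acommOp (Aplus p i) (Aminus p i)

/-- Position operator r̂_k(t) = e^{−it} A_k⁺ + e^{it} A_k⁻. -/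
noncomputable def rOp (p : ℕ) (k : Fin 3) (t : ℝ) : WV →ₗ[ℂ] WV :=
  Complex.exp (-(t : ℂ) * Complex.I) • Aplus p k +
    Complex.exp ((t : ℂ) * Complex.I) • Aminus p k

/-- Momentum operator p̂_k(t) = −i (e^{−it} A_k⁺ − e^{it} A_k⁻). -/
noncomputable def pOp (p : ℕ) (k : Fin 3) (t : ℝ) : WV →ₗ[ℂ] WV :=
  (-Complex.I) • (Complex.exp (-(t : ℂ) * Complex.I) • Aplus p k -
    Complex.exp ((t : ℂ) * Complex.I) • Aminus p k)

/-- Levi-Civita symbol ε_{jkl} with ε_{123} = 1 (indices 0,1,2 here). -/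
def eps (j k l : Fin 3) : ℂ :=
  if (j, k, l) = (0, 1, 2) ∨ (j, k, l) = (1, 2, 0) ∨ (j, k, l) = (2, 0, 1) then 1
  else if (j, k, l) = (2, 1, 0) ∨ (j, k, l) = (1, 0, 2) ∨ (j, k, l) = (0, 2, 1) then -1
  else 0

/-- Angular momentum M_j = −i Σ_{k,l} ε_{jkl} {A_k⁺, A_l⁻}. -/
noncomputable def Mop (p : ℕ) (j : Fin 3) : WV →ₗ[ℂ] WV :=
  (-Complex.I) • ∑ k, ∑ l, eps j k l • acommOp (Aplus p k) (Aminus p l)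

/-- Eigenvectors v_k(Θ,t) of the position operator r̂_k(t). -/
noncomputable def vVec (k : Fin 3) (t : ℝ) (Θ : WIdx) : WV :=
  (((Real.sqrt 2)⁻¹ : ℝ) : ℂ) •
    (eV (Function.update Θ k 0) +
      (sgnUpTo k Θ * Complex.exp (-(t : ℂ) * Complex.I)) • eV (Function.update Θ k 1))

/-- Eigenvectors ṽ_k(Θ,t) of the momentum operator p̂_k(t). -/
noncomputable def vTilde (k : Fin 3) (t : ℝ) (Θ : WIdx) : WV :=
  (((Real.sqrt 2)⁻¹ : ℝ) : ℂ) •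
    (eV (Function.update Θ k 0) -
      (Complex.I * sgnUpTo k Θ * Complex.exp (-(t : ℂ) * Complex.I)) • eV (Function.update Θ k 1))

/-- The non-stationary state z = (1/√2)(e_{(0,0,0)} + e_{(0,0,1)}). -/
noncomputable def zState : WV :=
  (((Real.sqrt 2)⁻¹ : ℝ) : ℂ) • (eV ![0, 0, 0] + eV ![0, 0, 1])

/-- The state x₁ = (1/√2)(e_{(0,1,0)} + e_{(1,1,0)}). -/
noncomputable def x1State : WV :=
  (((Real.sqrt 2)⁻¹ : ℝ) : ℂ) • (eV ![0, 1, 0] + eV ![1, 1, 0])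

local notation "⟪" x ", " y "⟫" => @inner ℂ _ _ x y


lemma bV_eq (Θ : WIdx) : bV Θ = eV Θ := by
  simp [bV, eV, OrthonormalBasis.coe_toBasis, EuclideanSpace.basisFun_apply]

lemma Aminus_apply (p : ℕ) (i : Fin 3) (Θ : WIdx) :
    Aminus p i (eV Θ) = (((Θ i : ℕ) : ℂ) * sgnBelow i Θ *
      ((Real.sqrt ((p : ℝ) - (qv Θ : ℝ) + 1) : ℝ) : ℂ)) • eV (Function.update Θ i 0) := by
  rw [← bV_eq]; exact Module.Basis.constr_basis _ _ _ _

lemma Aplus_apply (p : ℕ) (i : Fin 3) (Θ : WIdx) :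
    Aplus p i (eV Θ) = (((1 : ℂ) - ((Θ i : ℕ) : ℂ)) * sgnBelow i Θ *
      ((Real.sqrt ((p : ℝ) - (qv Θ : ℝ)) : ℝ) : ℂ)) • eV (Function.update Θ i 1) := by
  rw [← bV_eq]; exact Module.Basis.constr_basis _ _ _ _

lemma sgn_sq (i : Fin 3) (Θ : WIdx) : sgnBelow i Θ * sgnBelow i Θ = 1 := by
  unfold sgnBelow; rw [← pow_add, ← two_mul, pow_mul]; norm_num

lemma qv_update (Θ : WIdx) (k : Fin 3) (c : Fin 2) :
    qv (Function.update Θ k c) + (Θ k : ℕ) = qv Θ + (c : ℕ) := by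
  unfold qv
  rw [Fin.sum_univ_three, Fin.sum_univ_three]
  fin_cases k <;>
    simp [Function.update_self, Function.update_of_ne, Fin.ext_iff] <;> ring

lemma sgnBelow_update (Θ : WIdx) (k : Fin 3) (c : Fin 2) :
    sgnBelow k (Function.update Θ k c) = sgnBelow k Θ := by
  unfold sgnBelow
  congr 1
  refine Finset.sum_congr rfl fun j _ => ?_
  by_cases hj : (j : ℕ) < (k : ℕ)
  · have hne : j ≠ k := fun h => by simp [h] at hj
    rw [Function.update_of_ne hne]
  · simp [hj]

lemma qv_le (Θ : WIdx) : qv Θ ≤ 3 := by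
  unfold qv
  calc ∑ j, (Θ j : ℕ) ≤ ∑ _j : Fin 3, 1 :=
        Finset.sum_le_sum fun j _ => Fin.is_le (Θ j)
    _ = 3 := by simp

lemma AplusAminus (p : ℕ) (hp : 3 ≤ p) (k : Fin 3) (Θ : WIdx) :
    Aplus p k (Aminus p k (eV Θ)) =
      (((Θ k : ℕ) : ℂ) * ((p : ℂ) - (qv Θ : ℂ) + 1)) • eV Θ := by
  have hpq : (0:ℝ) ≤ (p:ℝ) - (qv Θ:ℝ) + 1 := by
    have h1 : (qv Θ : ℝ) ≤ 3 := by exact_mod_cast qv_le Θ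
    have h2 : (3:ℝ) ≤ p := by exact_mod_cast hp
    linarith
  rcases (by omega : Θ k = 0 ∨ Θ k = 1) with h | h
  · rw [Aminus_apply]; simp [h]
  · rw [Aminus_apply, map_smul, Aplus_apply]
    have hup : Function.update (Function.update Θ k 0) k 1 = Θ := by
      rw [Function.update_idem, ← h, Function.update_eq_self]
    have hq : qv (Function.update Θ k 0) + 1 = qv Θ := by
      have h0 := qv_update Θ k 0; rw [h] at h0; simpa using h0
    have hqR : ((qv (Function.update Θ k 0)) : ℝ) = (qv Θ : ℝ) - 1 := by
      have : ((qv (Function.update Θ k 0) : ℕ) : ℝ) + 1 = (qv Θ : ℝ) := by exact_mod_cast hq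
      linarith
    rw [hup, sgnBelow_update, smul_smul, Function.update_self, hqR]
    congr 1
    have hss : ((Real.sqrt ((p:ℝ) - (qv Θ:ℝ) + 1) : ℝ) : ℂ) *
        ((Real.sqrt ((p:ℝ) - (qv Θ:ℝ) + 1) : ℝ) : ℂ) = (p:ℂ) - (qv Θ:ℂ) + 1 := by
      rw [← Complex.ofReal_mul, Real.mul_self_sqrt hpq]; push_cast; ring
    have hs := sgn_sq k Θ
    have harg : (p:ℝ) - ((qv Θ:ℝ) - 1) = (p:ℝ) - (qv Θ:ℝ) + 1 := by ring
    rw [harg, h]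
    simp only [Fin.val_zero, Fin.val_one, Nat.cast_zero, Nat.cast_one]
    linear_combination (((Real.sqrt ((p:ℝ) - (qv Θ:ℝ) + 1) : ℝ) : ℂ) *
      ((Real.sqrt ((p:ℝ) - (qv Θ:ℝ) + 1) : ℝ) : ℂ)) * hs + hss

lemma AminusAplus (p : ℕ) (hp : 3 ≤ p) (k : Fin 3) (Θ : WIdx) :
    Aminus p k (Aplus p k (eV Θ)) =
      (((1 : ℂ) - ((Θ k : ℕ) : ℂ)) * ((p : ℂ) - (qv Θ : ℂ))) • eV Θ := by
  have hpq : (0:ℝ) ≤ (p:ℝ) - (qv Θ:ℝ) := by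
    have h1 : (qv Θ : ℝ) ≤ 3 := by exact_mod_cast qv_le Θ
    have h2 : (3:ℝ) ≤ p := by exact_mod_cast hp
    linarith
  rcases (by omega : Θ k = 0 ∨ Θ k = 1) with h | h
  · rw [Aplus_apply, map_smul, Aminus_apply]
    have hup : Function.update (Function.update Θ k 1) k 0 = Θ := by
      rw [Function.update_idem, ← h, Function.update_eq_self]
    have hq : qv (Function.update Θ k 1) = qv Θ + 1 := by
      have h0 := qv_update Θ k 1; rw [h] at h0; simpa using h0
    have hqR : ((qv (Function.update Θ k 1)) : ℝ) = (qv Θ : ℝ) + 1 := by exact_mod_cast hq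
    rw [hup, sgnBelow_update, smul_smul, Function.update_self, hqR]
    congr 1
    have harg : (p:ℝ) - ((qv Θ:ℝ) + 1) + 1 = (p:ℝ) - (qv Θ:ℝ) := by ring
    rw [harg, h]
    have hss : ((Real.sqrt ((p:ℝ) - (qv Θ:ℝ)) : ℝ) : ℂ) *
        ((Real.sqrt ((p:ℝ) - (qv Θ:ℝ)) : ℝ) : ℂ) = (p:ℂ) - (qv Θ:ℂ) := by
      rw [← Complex.ofReal_mul, Real.mul_self_sqrt hpq]; push_cast; ring
    have hs := sgn_sq k Θ
    simp only [Fin.val_zero, Fin.val_one, Nat.cast_zero, Nat.cast_one]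
    linear_combination (((Real.sqrt ((p:ℝ) - (qv Θ:ℝ)) : ℝ) : ℂ) *
      ((Real.sqrt ((p:ℝ) - (qv Θ:ℝ)) : ℝ) : ℂ)) * hs + hss
  · rw [Aplus_apply]; simp [h]

lemma plus_plus (p : ℕ) (k : Fin 3) (Θ : WIdx) :
    Aplus p k (Aplus p k (eV Θ)) = 0 := by
  rw [Aplus_apply, map_smul, Aplus_apply]
  simp [Function.update_self]

lemma minus_minus (p : ℕ) (k : Fin 3) (Θ : WIdx) :
    Aminus p k (Aminus p k (eV Θ)) = 0 := by
  rw [Aminus_apply, map_smul, Aminus_apply]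
  simp [Function.update_self]

/-- r̂_k(t)² e_Θ = p̂_k(t)² e_Θ = (p − q(Θ) + θ_k) e_Θ. -/
theorem stmt6 (p : ℕ) (hp : 3 ≤ p) (k : Fin 3) (t : ℝ) (Θ : WIdx) :
    rOp p k t (rOp p k t (eV Θ)) =
      (((p : ℂ) - (qv Θ : ℂ) + ((Θ k : ℕ) : ℂ))) • eV Θ ∧
    pOp p k t (pOp p k t (eV Θ)) =
      (((p : ℂ) - (qv Θ : ℂ) + ((Θ k : ℕ) : ℂ))) • eV Θ := by
  have hexp : Complex.exp (-(t : ℂ) * Complex.I) * Complex.exp ((t : ℂ) * Complex.I) = 1 := by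
    rw [← Complex.exp_add]; ring_nf; exact Complex.exp_zero
  have hpm := AplusAminus p hp k Θ
  have hmp := AminusAplus p hp k Θ
  have hpp := plus_plus p k Θ
  have hmm := minus_minus p k Θ
  constructor
  · simp only [rOp, LinearMap.add_apply, LinearMap.smul_apply, map_add, map_smul,
      hpp, hmm, hpm, hmp, smul_zero, add_zero, zero_add, smul_smul]
    match_scalars
    linear_combination ((p:ℂ) - (qv Θ:ℂ) + ((Θ k:ℕ):ℂ)) * hexp
  · simp only [pOp, LinearMap.smul_apply, LinearMap.sub_apply, LinearMap.add_apply,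
      map_smul, map_sub, map_add, hpp, hmm, hpm, hmp, smul_zero, sub_zero, zero_sub,
      smul_smul, smul_sub, smul_neg]
    match_scalars
    linear_combination ((p:ℂ) - (qv Θ:ℂ) + ((Θ k:ℕ):ℂ)) * hexp +
      (-(Complex.exp (-(t:ℂ) * Complex.I) * Complex.exp ((t:ℂ) * Complex.I)) *
        (((Θ k:ℕ):ℂ) + (p:ℂ) - (qv Θ:ℂ))) * Complex.I_sq
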